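/- For an unconstrained monopsonistic firm with Cobb-Douglas production, the rent-sharing elasticity (ratio of the productivity-elasticity of the wage to the productivity-elasticity of value added) equals 1/(1+η): since d ln W*/d ln Φ = 1/(1+η(1−α)) and d ln VA*/d ln Φ = (1+η)/(1+η(1−α)), their ratio is 1/(1+η), independent of α. -/

import Mathlib

/-- For an unconstrained monopsonist with Cobb-Douglas production, with
`W*(Φ) = (c'·Φ)^(1/(1+η(1−α)))` and `VA*(Φ) = Φ·L*(Φ)^α`,
`L*(Φ) = (c·Φ)^(η/(1+η(1−α)))`, the productivity elasticity of the wage is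
`1/(1+η(1−α))`, that of value added is `(1+η)/(1+η(1−α))`, and their ratio (the
rent-sharing elasticity) is `1/(1+η)`, independent of `α`. -/
theorem unconstrained_rent_sharing_elasticity
    (c c' η α : ℝ)
    (hc : 0 < c) (hc' : 0 < c') (hη : 0 < η)
    (hα : α ∈ Set.Ioo (0 : ℝ) 1) :
    (∀ t : ℝ, HasDerivAt
      (fun t : ℝ => Real.log ((c' * Real.exp t) ^ (1 / (1 + η * (1 - α)))))
      (1 / (1 + η * (1 - α))) t) ∧
    (∀ t : ℝ, HasDerivAt
      (fun t : ℝ => Real.log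
        (Real.exp t * ((c * Real.exp t) ^ (η / (1 + η * (1 - α)))) ^ α))
      ((1 + η) / (1 + η * (1 - α))) t) ∧
    (1 / (1 + η * (1 - α))) / ((1 + η) / (1 + η * (1 - α))) = 1 / (1 + η) := by
  have hD : 0 < 1 + η * (1 - α) := by nlinarith [hα.1, hα.2]
  set D := 1 + η * (1 - α) with hDdef
  constructor
  · intro t
    have heq : (fun t : ℝ => Real.log ((c' * Real.exp t) ^ (1 / D)))
        = fun t : ℝ => (1 / D) * (Real.log c' + t) := by
      funext t
      rw [Real.log_rpow (by positivity), Real.log_mul (ne_of_gt hc')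
        (Real.exp_ne_zero t), Real.log_exp]
    rw [heq]
    have h := ((hasDerivAt_id t).const_add (Real.log c')).const_mul (1 / D)
    simpa using h
  constructor
  · intro t
    have heq : (fun t : ℝ => Real.log
        (Real.exp t * ((c * Real.exp t) ^ (η / D)) ^ α))
        = fun t : ℝ => t + α * ((η / D) * (Real.log c + t)) := by
      funext t
      rw [Real.log_mul (Real.exp_ne_zero t) (by positivity), Real.log_exp,
        Real.log_rpow (by positivity), Real.log_rpow (by positivity),
        Real.log_mul (ne_of_gt hc) (Real.exp_ne_zero t), Real.log_exp]
    rw [heq]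
    have h := (hasDerivAt_id t).add
      ((((hasDerivAt_id t).const_add (Real.log c)).const_mul (η / D)).const_mul α)
    have hval : (1 : ℝ) + α * (η / D) = (1 + η) / D := by
      field_simp
      rw [hDdef]; ring
    simpa [hval, Pi.add_def] using h
  · rw [div_div_div_eq, one_mul]
    rw [mul_comm, ← div_div, div_right_comm, div_self (ne_of_gt hD)]
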